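/- If G is a minimally 2-connected simple graph (i.e., G is 2-connected and for every edge e, G - e is not 2-connected), then G has a vertex of degree 2. -/

import Mathlib

namespace SimpleGraph

variable {V : Type*}

/-- A simple graph is `2`-connected if it has at least `3` vertices and
deleting any single vertex leaves a connected graph. -/
def TwoConnected [Fintype V] (G : SimpleGraph V) : Prop :=
  3 ≤ Fintype.card V ∧ ∀ x : V, (G.induce {y | y ≠ x}).Connected

/-- A simple graph is minimally `2`-connected if it is `2`-connected and the deletion of
any edge yields a graph that is not `2`-connected. -/
def MinimallyTwoConnected [Fintype V] (G : SimpleGraph V) : Prop :=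
  G.TwoConnected ∧ ∀ e ∈ G.edgeSet, ¬ (G.deleteEdges {e}).TwoConnected

/-- Two `u`–`v` walks are internally disjoint if they share no vertex besides `u` and `v`
and share no edge. -/
def IntDisjoint (G : SimpleGraph V) {u v : V} (p q : G.Walk u v) : Prop :=
  (∀ w ∈ p.support, w ∈ q.support → w = u ∨ w = v) ∧ ∀ e ∈ p.edges, e ∉ q.edges

/-- `κ_G(u,v)`: the maximum number of pairwise internally disjoint `u`–`v` paths in `G`. -/
noncomputable def kappa (G : SimpleGraph V) (u v : V) : ℕ :=
  sSup {k | ∃ p : Fin k → G.Walk u v, (∀ i, (p i).IsPath) ∧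
    ∀ i j, i ≠ j → G.IntDisjoint (p i) (p j)}

/-- The average connectivity of `G`: the average of `κ_G(u,v)` over all unordered pairs of
distinct vertices (computed here as the sum over ordered pairs divided by `n(n-1)`). -/
noncomputable def avgKappa [Fintype V] [DecidableEq V] (G : SimpleGraph V) : ℚ :=
  (∑ p ∈ Finset.univ.offDiag, (G.kappa p.1 p.2 : ℚ)) /
    ((Fintype.card V : ℚ) * ((Fintype.card V : ℚ) - 1))

/-! ### Auxiliary walk lemmas -/

namespace Walk

variable {G : SimpleGraph V}

/-- The walk consisting of the first `n` darts of `p` (all of `p` if `n ≥ p.length`). -/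
def takeW {u v : V} : (p : G.Walk u v) → (n : ℕ) → G.Walk u (p.getVert n)
  | p, 0 => Walk.nil.copy rfl (p.getVert_zero).symm
  | Walk.nil, _ + 1 => Walk.nil
  | Walk.cons h q, n + 1 => Walk.cons h (q.takeW n)

lemma getVert_drop {u v : V} (p : G.Walk u v) (n m : ℕ) :
    (p.drop n).getVert m = p.getVert (n + m) := by
  induction p generalizing n with
  | nil => simp [drop, Walk.getVert_of_length_le]
  | cons h q ih =>
    cases n with
    | zero => simp [drop]
    | succ n =>
      simp only [drop, getVert_copy]
      convert ih n using 1
      · rfl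
      · rw [show n + 1 + m = (n + m) + 1 by omega, getVert_cons_succ]

lemma mem_support_takeW {u v w : V} (p : G.Walk u v) (n : ℕ)
    (hw : w ∈ (p.takeW n).support) : ∃ m, m ≤ n ∧ m ≤ p.length ∧ p.getVert m = w := by
  induction p generalizing n with
  | nil =>
    cases n with
    | zero =>
      simp only [takeW, support_copy, support_nil, List.mem_singleton] at hw
      exact ⟨0, by simp [hw]⟩
    | succ n =>
      simp only [takeW, support_copy, support_nil, List.mem_singleton] at hw
      exact ⟨0, by simp [List.mem_singleton.mp (show w ∈ [_] from hw)]⟩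
  | cons h q ih =>
    cases n with
    | zero =>
      simp only [takeW, support_copy, support_nil, List.mem_singleton] at hw
      exact ⟨0, by simp [hw]⟩
    | succ n =>
      simp only [takeW, support_cons, List.mem_cons] at hw
      rcases List.mem_cons.mp (show w ∈ _ :: _ from hw) with rfl | hw
      · exact ⟨0, by simp⟩
      · obtain ⟨m, hm1, hm2, hm3⟩ := ih n hw
        exact ⟨m + 1, by omega, by simpa using hm2, hm3⟩

lemma edges_takeW_subset {u v : V} (p : G.Walk u v) (n : ℕ) :
    (p.takeW n).edges ⊆ p.edges := by
  induction p generalizing n with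
  | nil =>
    cases n with
    | zero => simp [takeW]
    | succ n => simp [takeW]
  | cons h q ih =>
    cases n with
    | zero => simp [takeW]
    | succ n =>
      simp only [takeW, edges_cons]
      intro e he
      rcases List.mem_cons.mp he with rfl | he
      · exact List.mem_cons_self
      · exact List.mem_cons_of_mem _ (ih n he)

lemma length_drop {u v : V} (p : G.Walk u v) (n : ℕ) :
    (p.drop n).length = p.length - n := by
  induction p generalizing n with
  | nil => simp [drop]
  | cons h q ih =>
    cases n with
    | zero => simp [drop]
    | succ n => simpa [drop] using ih n

lemma mem_support_drop {u v w : V} (p : G.Walk u v) (n : ℕ)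
    (hn : n ≤ p.length) (hw : w ∈ (p.drop n).support) :
    ∃ m, n ≤ m ∧ m ≤ p.length ∧ p.getVert m = w := by
  rw [mem_support_iff_exists_getVert] at hw
  obtain ⟨m, hm, hmle⟩ := hw
  rw [getVert_drop] at hm
  rw [length_drop] at hmle
  exact ⟨n + m, by omega, by omega, hm⟩

lemma edges_drop_subset {u v : V} (p : G.Walk u v) (n : ℕ) :
    (p.drop n).edges ⊆ p.edges := by
  induction p generalizing n with
  | nil => simp [drop]
  | cons h q ih =>
    cases n with
    | zero => simp [drop]
    | succ n =>
      simp only [drop, edges_copy, edges_cons]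
      intro e he
      exact List.mem_cons_of_mem _ (ih n he)

lemma IsPath.getVert_injOn' {u v : V} {p : G.Walk u v} (hp : p.IsPath) :
    ∀ i ≤ p.length, ∀ j ≤ p.length, p.getVert i = p.getVert j → i = j := by
  induction p with
  | nil => intro i hi j hj _; simp only [length_nil, Nat.le_zero] at hi hj; omega
  | cons h q ih =>
    intro i hi j hj hij
    rw [cons_isPath_iff] at hp
    cases i with
    | zero =>
      cases j with
      | zero => rfl
      | succ j =>
        exfalso
        rw [getVert_zero, getVert_cons_succ] at hij
        exact hp.2 (mem_support_iff_exists_getVert.mpr ⟨j, hij.symm, by simpa using hj⟩)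
    | succ i =>
      cases j with
      | zero =>
        exfalso
        rw [getVert_zero, getVert_cons_succ] at hij
        exact hp.2 (mem_support_iff_exists_getVert.mpr ⟨i, hij, by simpa using hi⟩)
      | succ j =>
        rw [getVert_cons_succ, getVert_cons_succ] at hij
        have := ih hp.1 i (by simpa using hi) j (by simpa using hj) hij
        omega

lemma exists_getVert_of_mem_edges {u v x y : V} {p : G.Walk u v}
    (he : s(x, y) ∈ p.edges) : ∃ k < p.length,
      (p.getVert k = x ∧ p.getVert (k + 1) = y) ∨ (p.getVert k = y ∧ p.getVert (k + 1) = x) := by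
  induction p with
  | nil => simp at he
  | cons h q ih =>
    rw [edges_cons, List.mem_cons] at he
    rcases he with he | he
    · rw [Sym2.eq_iff] at he
      refine ⟨0, by simp, ?_⟩
      rcases he with ⟨rfl, rfl⟩ | ⟨rfl, rfl⟩
      · exact Or.inl ⟨getVert_zero _, by simp [getVert_cons_succ]⟩
      · exact Or.inr ⟨getVert_zero _, by simp [getVert_cons_succ]⟩
    · obtain ⟨k, hk, hor⟩ := ih he
      exact ⟨k + 1, by simpa using hk, by simpa [getVert_cons_succ] using hor⟩

end Walk

/-! ### Connectivity transfer lemmas -/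

lemma reachable_of_repair {H K : SimpleGraph V}
    (hfix : ∀ u w : V, H.Adj u w → K.Reachable u w) :
    ∀ {u w : V}, H.Reachable u w → K.Reachable u w := by
  intro u w hr
  obtain ⟨p⟩ := hr
  induction p with
  | nil => exact Reachable.refl _
  | cons h q ih => exact (hfix _ _ h).trans ih

lemma connected_of_repair {H K : SimpleGraph V} (hH : H.Connected)
    (hfix : ∀ u w : V, H.Adj u w → K.Reachable u w) : K.Connected := by
  haveI : Nonempty V := hH.nonempty
  exact ⟨fun u w => reachable_of_repair hfix (hH.preconnected u w)⟩

lemma reachable_induce_of_walk {K : SimpleGraph V} {S : Set V} {a b : V}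
    (p : K.Walk a b) (hp : ∀ w ∈ p.support, w ∈ S) (ha : a ∈ S) (hb : b ∈ S) :
    (K.induce S).Reachable ⟨a, ha⟩ ⟨b, hb⟩ := by
  induction p with
  | nil => exact Reachable.refl _
  | @cons u c v h q ih =>
    have hc : c ∈ S := hp c (by simp)
    have h1 : (K.induce S).Adj ⟨u, ha⟩ ⟨c, hc⟩ := by simpa using h
    exact h1.reachable.trans (ih (fun w hw => hp w (by simp [hw])) hc hb)

lemma reachable_delete_induce {G : SimpleGraph V} {a b x : V} (e : Sym2 V) (W : G.Walk a b)
    (hE : ∀ e' ∈ W.edges, e' ≠ e) (hS : ∀ z ∈ W.support, z ≠ x) (ha : a ≠ x) (hb : b ≠ x) :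
    ((G.deleteEdges {e}).induce {y | y ≠ x}).Reachable ⟨a, ha⟩ ⟨b, hb⟩ := by
  have hE' : ∀ e' ∈ W.edges, e' ∉ ({e} : Set (Sym2 V)) := by simpa using hE
  have hsup : (W.toDeleteEdges {e} hE').support = W.support := Walk.support_transfer _ _
  exact reachable_induce_of_walk (W.toDeleteEdges {e} hE')
    (fun z hz => hS z (hsup ▸ hz)) ha hb

/-! ### Minimum degree lemmas -/

lemma exists_third [Fintype V] [DecidableEq V] (hcard : 3 ≤ Fintype.card V) (v x : V) :
    ∃ u : V, u ≠ v ∧ u ≠ x := by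
  by_contra hc
  push_neg at hc
  have hsub : (Finset.univ : Finset V) ⊆ {v, x} := by
    intro u _
    rcases Classical.em (u = v) with rfl | hu
    · simp
    · simp [hc u hu]
  have h2 := Finset.card_le_card hsub
  simp only [Finset.card_univ] at h2
  have h3 : ({v, x} : Finset V).card ≤ 2 := (Finset.card_insert_le _ _).trans (by simp)
  omega

lemma exists_adj_ne [Fintype V] [DecidableEq V] {G : SimpleGraph V} (h : TwoConnected G)
    (v x : V) (hvx : v ≠ x) : ∃ c : V, G.Adj v c ∧ c ≠ x := by
  obtain ⟨u, huv, hux⟩ := exists_third h.1 v x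
  have hr := (h.2 x).preconnected ⟨v, hvx⟩ ⟨u, hux⟩
  obtain ⟨p⟩ := hr
  have hne : (⟨v, hvx⟩ : {y | y ≠ x}) ≠ ⟨u, hux⟩ := by
    simp [Subtype.ext_iff]; exact fun hh => (huv hh.symm).elim
  have hnil : ¬ p.Nil := Walk.not_nil_of_ne hne
  have hadj := p.adj_snd hnil
  simp only [comap_adj, Function.Embedding.coe_subtype] at hadj
  exact ⟨(p.getVert 1 : {y | y ≠ x}), hadj, (p.getVert 1).2⟩

lemma two_le_degree [Fintype V] [DecidableEq V] {G : SimpleGraph V} [DecidableRel G.Adj]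
    (h : TwoConnected G) (v : V) : 2 ≤ G.degree v := by
  by_contra hd
  push_neg at hd
  rcases (by omega : G.degree v = 0 ∨ G.degree v = 1) with h0 | h1
  · obtain ⟨x, hx, -⟩ := exists_third h.1 v v
    obtain ⟨c, hc, -⟩ := exists_adj_ne h v x (Ne.symm hx)
    have : c ∈ G.neighborFinset v := by simpa using hc
    have h0' : (G.neighborFinset v).card = 0 := h0
    rw [Finset.card_eq_zero.mp h0'] at this
    simp at this
  · have h1' : (G.neighborFinset v).card = 1 := h1
    obtain ⟨w, hw⟩ := Finset.card_eq_one.mp h1'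
    have hadjw : G.Adj v w := by
      have : w ∈ G.neighborFinset v := by simp [hw]
      simpa using this
    obtain ⟨c, hc, hcw⟩ := exists_adj_ne h v w hadjw.ne
    have : c ∈ G.neighborFinset v := by simpa using hc
    rw [hw] at this
    exact hcw (by simpa using this)

/-! ### Longest path -/

lemma exists_longest_path [Fintype V] {G : SimpleGraph V} {a0 b0 : V} (h0 : G.Adj a0 b0) :
    ∃ (a b : V) (p : G.Walk a b), p.IsPath ∧
      ∀ (c d : V) (q : G.Walk c d), q.IsPath → q.length ≤ p.length := by
  let P : Set ℕ := {n | ∃ (a b : V) (p : G.Walk a b), p.IsPath ∧ p.length = n}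
  have hne : P.Nonempty :=
    ⟨1, a0, b0, Walk.cons h0 Walk.nil, by simp [Walk.cons_isPath_iff, h0.ne], by simp⟩
  have hbdd : BddAbove P := by
    refine ⟨Fintype.card V, ?_⟩
    rintro n ⟨a, b, p, hp, rfl⟩
    exact hp.length_lt.le
  have hmem := Nat.sSup_mem hne hbdd
  obtain ⟨a, b, p, hp, hl⟩ := hmem
  exact ⟨a, b, p, hp, fun c d q hq => hl ▸ le_csSup hbdd ⟨c, d, q, hq, rfl⟩⟩

end SimpleGraph

open SimpleGraph

/-- If `G` is a minimally `2`-connected simple graph, then `G` has a vertex of degree `2`. -/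
theorem stmt_0 {V : Type*} [Fintype V] [DecidableEq V] (G : SimpleGraph V)
    [DecidableRel G.Adj] (h : G.MinimallyTwoConnected) :
    ∃ v : V, G.degree v = 2 := by
  by_contra hdeg
  push_neg at hdeg
  have htc : G.TwoConnected := h.1
  have hcard : 3 ≤ Fintype.card V := htc.1
  have hdeg3 : ∀ v, 3 ≤ G.degree v := by
    intro v
    have h2 := two_le_degree htc v
    have h3 := hdeg v
    omega
  -- there is an edge
  haveI : Nonempty V := Fintype.card_pos_iff.mp (by omega)
  obtain ⟨v0⟩ := ‹Nonempty V›
  have hv0 : 0 < G.degree v0 := by have := hdeg3 v0; omega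
  obtain ⟨b0, hb0⟩ := (G.degree_pos_iff_exists_adj v0).mp hv0
  -- longest path
  obtain ⟨a, b, p, hp, hmax⟩ := exists_longest_path hb0
  set n := p.length with hn
  -- all neighbors of `a` lie on `p`
  have hnb : ∀ c, G.Adj a c → c ∈ p.support := by
    intro c hc
    by_contra hcs
    have hpath : (Walk.cons hc.symm p).IsPath := by
      rw [Walk.cons_isPath_iff]; exact ⟨hp, hcs⟩
    have := hmax _ _ _ hpath
    simp only [Walk.length_cons] at this
    omega
  -- index set of neighbors of `a` on `p`
  set I : Finset ℕ := (Finset.range (n + 1)).filter (fun i => G.Adj a (p.getVert i)) with hI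
  have hI3 : 3 ≤ I.card := by
    have hsub : G.neighborFinset a ⊆ I.image p.getVert := by
      intro c hc
      have hadj : G.Adj a c := by simpa using hc
      have hcs := hnb c hadj
      rw [Walk.mem_support_iff_exists_getVert] at hcs
      obtain ⟨m, hm, hmle⟩ := hcs
      refine Finset.mem_image.mpr ⟨m, ?_, hm⟩
      rw [hI, Finset.mem_filter, Finset.mem_range]
      exact ⟨by omega, hm ▸ hadj⟩
    calc 3 ≤ G.degree a := hdeg3 a
      _ ≤ (I.image p.getVert).card := Finset.card_le_card hsub
      _ ≤ I.card := Finset.card_image_le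
  have hIne : I.Nonempty := Finset.card_pos.mp (by omega)
  -- facts about members of I
  have hImem : ∀ m ∈ I, m ≤ n ∧ G.Adj a (p.getVert m) := by
    intro m hm
    rw [hI, Finset.mem_filter, Finset.mem_range] at hm
    exact ⟨by omega, hm.2⟩
  have hIpos : ∀ m ∈ I, 1 ≤ m := by
    intro m hm
    by_contra hm0
    have : m = 0 := by omega
    subst this
    have := (hImem 0 hm).2
    rw [p.getVert_zero] at this
    exact this.ne rfl
  -- extract three indices
  set j := I.max' hIne with hj
  have hjI : j ∈ I := I.max'_mem hIne
  have hI'ne : (I.erase j).Nonempty := by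
    rw [← Finset.card_pos, Finset.card_erase_of_mem hjI]; omega
  set i := (I.erase j).max' hI'ne with hi
  have hiI' : i ∈ I.erase j := Finset.max'_mem _ hI'ne
  have hiI : i ∈ I := Finset.mem_of_mem_erase hiI'
  have hij : i < j := lt_of_le_of_ne (I.le_max' i hiI) (Finset.ne_of_mem_erase hiI')
  have hI''ne : ((I.erase j).erase i).Nonempty := by
    rw [← Finset.card_pos, Finset.card_erase_of_mem hiI', Finset.card_erase_of_mem hjI]; omega
  set i0 := ((I.erase j).erase i).max' hI''ne with hi0
  have hi0I'' : i0 ∈ (I.erase j).erase i := Finset.max'_mem _ hI''ne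
  have hi0i : i0 < i :=
    lt_of_le_of_ne ((I.erase j).le_max' i0 (Finset.mem_of_mem_erase hi0I''))
      (Finset.ne_of_mem_erase hi0I'')
  have hi0pos : 1 ≤ i0 := hIpos i0 (Finset.mem_of_mem_erase (Finset.mem_of_mem_erase hi0I''))
  have hi2 : 2 ≤ i := by omega
  have hjn : j ≤ n := (hImem j hjI).1
  have hin : i ≤ n := (hImem i hiI).1
  have hadji : G.Adj a (p.getVert i) := (hImem i hiI).2
  have hadjj : G.Adj a (p.getVert j) := (hImem j hjI).2
  have hivi : p.getVert i ≠ p.getVert j := by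
    intro hh
    have := hp.getVert_injOn' i (hn ▸ hin) j (hn ▸ hjn) hh
    omega
  -- the chord
  set e : Sym2 V := s(a, p.getVert i) with he_def
  have he : e ∈ G.edgeSet := hadji
  -- e is not an edge of p
  have heP : e ∉ p.edges := by
    intro hmem
    rw [he_def] at hmem
    obtain ⟨k, hk, hor⟩ := Walk.exists_getVert_of_mem_edges hmem
    rcases hor with ⟨h1, h2⟩ | ⟨h1, h2⟩
    · have hk0 : k = 0 :=
        hp.getVert_injOn' k (le_of_lt hk) 0 (Nat.zero_le _) (h1.trans (p.getVert_zero).symm)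
      subst hk0
      have h1i : (1 : ℕ) = i := hp.getVert_injOn' 1 (by omega) i (hn ▸ hin) h2
      omega
    · have : k + 1 = 0 :=
        hp.getVert_injOn' (k + 1) (by omega) 0 (Nat.zero_le _) (h2.trans (p.getVert_zero).symm)
      omega
  -- minimality gives a bad vertex x
  obtain ⟨x, hxdis⟩ : ∃ x, ¬ ((G.deleteEdges {e}).induce {y | y ≠ x}).Connected := by
    have hnot := h.2 e he
    rw [TwoConnected] at hnot
    push_neg at hnot
    exact hnot hcard
  apply hxdis
  -- we show the deletion of e keeps G - x connected
  apply connected_of_repair (htc.2 x)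
  intro u w huw
  by_cases hK : ((G.deleteEdges {e}).induce {y | y ≠ x}).Adj u w
  · exact hK.reachable
  · have hGuw : G.Adj u.val w.val := huw
    have hee : s(u.val, w.val) = e := by
      simp only [comap_adj, Function.Embedding.coe_subtype, deleteEdges_adj,
        Set.mem_singleton_iff] at hK
      by_contra hne
      exact hK ⟨hGuw, hne⟩
    -- the key claim : a and getVert i are connected in (G - e) - x
    have claim : ∀ (hu : a ≠ x) (hw : p.getVert i ≠ x),
        ((G.deleteEdges {e}).induce {y | y ≠ x}).Reachable ⟨a, hu⟩ ⟨p.getVert i, hw⟩ := by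
      intro hax hvix
      -- arc 1 : along p from a to getVert i
      have harc1sup : ∀ z ∈ (p.takeW i).support, ∃ m, m ≤ i ∧ p.getVert m = z := by
        intro z hz
        obtain ⟨m, hm1, _, hm3⟩ := Walk.mem_support_takeW p i hz
        exact ⟨m, hm1, hm3⟩
      -- arc 2 : edge a - getVert j, then along p backwards from getVert j to getVert i
      have hgv : (p.drop i).getVert (j - i) = p.getVert j := by
        rw [Walk.getVert_drop]; congr 1; omega
      set mid : G.Walk (p.getVert i) (p.getVert j) :=
        ((p.drop i).takeW (j - i)).copy rfl hgv with hmid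
      have hmidsup : ∀ z ∈ mid.support, ∃ m, i ≤ m ∧ m ≤ j ∧ p.getVert m = z := by
        intro z hz
        rw [hmid, Walk.support_copy] at hz
        obtain ⟨m, hm1, hm2, hm3⟩ := Walk.mem_support_takeW _ _ hz
        rw [Walk.getVert_drop] at hm3
        exact ⟨i + m, by omega, by omega, hm3⟩
      have hmidedges : mid.edges ⊆ p.edges := by
        rw [hmid, Walk.edges_copy]
        exact fun e' he' => p.edges_drop_subset i (Walk.edges_takeW_subset _ _ he')
      by_cases hx1 : x ∈ (p.takeW i).support
      · -- x is on arc 1, use arc 2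
        obtain ⟨m, hm_le, hm_eq⟩ := harc1sup x hx1
        have hm0 : m ≠ 0 := by
          intro h0; subst h0; rw [p.getVert_zero] at hm_eq; exact hax hm_eq
        have hmi : m ≠ i := by
          intro h0; subst h0; exact hvix hm_eq
        set arc2 : G.Walk a (p.getVert i) := Walk.cons hadjj mid.reverse with harc2
        have harc2sup : ∀ z ∈ arc2.support, z ≠ x := by
          intro z hz
          rw [harc2, Walk.support_cons, List.mem_cons] at hz
          rcases hz with rfl | hz
          · exact hax
          · rw [Walk.support_reverse, List.mem_reverse] at hz
            obtain ⟨m', hm'1, hm'2, hm'3⟩ := hmidsup z hz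
            intro hzx
            have : m' = m := by
              apply hp.getVert_injOn' m' (by omega) m (by omega)
              rw [hm'3, hzx, hm_eq]
            omega
        have harc2edges : ∀ e' ∈ arc2.edges, e' ≠ e := by
          intro e' he'
          rw [harc2, Walk.edges_cons, List.mem_cons] at he'
          rcases he' with rfl | he'
          · rw [he_def]
            intro hcontra
            rw [Sym2.eq_iff] at hcontra
            rcases hcontra with ⟨-, h2⟩ | ⟨h1, h2⟩
            · exact hivi h2.symm
            · exact hadji.ne h1
          · rw [Walk.edges_reverse, List.mem_reverse] at he'
            intro hcontra
            exact heP (hcontra ▸ hmidedges he')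
        exact reachable_delete_induce e arc2 harc2edges harc2sup hax hvix
      · -- x is not on arc 1, use arc 1
        have harc1sup' : ∀ z ∈ (p.takeW i).support, z ≠ x := by
          intro z hz hzx
          exact hx1 (hzx ▸ hz)
        have harc1edges : ∀ e' ∈ (p.takeW i).edges, e' ≠ e := by
          intro e' he' hcontra
          exact heP (hcontra ▸ Walk.edges_takeW_subset p i he')
        have := reachable_delete_induce e ((p.takeW i).copy rfl
          (by rw [(show p.getVert i = p.getVert i from rfl)] : p.getVert i = p.getVert i))
          (by rw [Walk.edges_copy]; exact harc1edges)
          (by rw [Walk.support_copy]; exact harc1sup') hax hvix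
        exact this
    -- finish : u, w are the endpoints of e (in some order)
    obtain ⟨uv, hu2⟩ := u
    obtain ⟨wv, hw2⟩ := w
    rw [he_def, Sym2.eq_iff] at hee
    rcases hee with ⟨h1, h2⟩ | ⟨h1, h2⟩
    · subst h1; subst h2
      exact claim hu2 hw2
    · subst h1; subst h2
      exact (claim hw2 hu2).symm
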